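/- Let k ≤ n and let w ∈ S_n fix each of 1, ..., n−k pointwise. Let H ≤ S_n be the subgroup of permutations fixing each of n−k+1, ..., n (the standard copy of S_{n−k}), and let R ⊆ S_n be any complete set of representatives of the left cosets of H in S_n. Then in ℂ[S_n], Σ_{g ∈ R} g w g^{-1} = (z/(n−k)!) · Γ, where Γ is the sum of all permutations of S_n conjugate to w and z is the order of the centralizer of w in S_n. In particular, the left-hand side does not depend on the choice of R. -/

import Mathlib

/-- The standard copy of `S_{n-k}` inside `S_n`: the subgroup of permutations fixing
each of `n-k+1, …, n` (with elements of `{1, …, n}` modelled as `Fin n`, these are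
the positions with 0-indexed value `≥ n - k`). -/
def lastFixSubgroup (n k : ℕ) : Subgroup (Equiv.Perm (Fin n)) where
  carrier := {σ : Equiv.Perm (Fin n) | ∀ a : Fin n, n - k ≤ (a : ℕ) → σ a = a}
  one_mem' := fun _ _ => rfl
  mul_mem' := by
    intro σ τ hσ hτ a ha
    simp only [Equiv.Perm.mul_apply, hτ a ha, hσ a ha]
  inv_mem' := by
    intro σ hσ a ha
    nth_rewrite 1 [← hσ a ha]
    exact σ.symm_apply_apply a

lemma mem_lastFix_iff (n k : ℕ) (σ : Equiv.Perm (Fin n)) :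
    σ ∈ lastFixSubgroup n k ↔ ∀ a : Fin n, n - k ≤ (a : ℕ) → σ a = a := Iff.rfl

lemma card_lastFixSubgroup (n k : ℕ) :
    Nat.card (lastFixSubgroup n k) = (n - k).factorial := by
  classical
  have e1 : {a : Fin n // (a : ℕ) < n - k} ≃ Fin (n - k) :=
    { toFun := fun a => ⟨(a.1 : ℕ), a.2⟩
      invFun := fun b => ⟨⟨b.1, lt_of_lt_of_le b.2 (Nat.sub_le n k)⟩, b.2⟩
      left_inv := fun a => rfl
      right_inv := fun b => rfl }
  have e2 : (lastFixSubgroup n k) ≃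
      { f : Equiv.Perm (Fin n) // ∀ a : Fin n, ¬ ((a : ℕ) < n - k) → f a = a } :=
    (Equiv.refl (Equiv.Perm (Fin n))).subtypeEquiv (by
      intro σ
      simp only [Equiv.refl_apply]
      constructor
      · intro h a ha; exact h a (not_lt.mp ha)
      · intro h a ha; exact h a (not_lt.mpr ha))
  rw [Nat.card_congr (e2.trans (Equiv.Perm.subtypeEquivSubtypePerm
        (fun a : Fin n => (a : ℕ) < n - k)).symm)]
  rw [Nat.card_eq_fintype_card, Fintype.card_perm, Fintype.card_congr e1, Fintype.card_fin]

lemma lastFix_comm (n k : ℕ) (w : Equiv.Perm (Fin n))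
    (hw : ∀ a : Fin n, (a : ℕ) < n - k → w a = a)
    {h : Equiv.Perm (Fin n)} (hh : h ∈ lastFixSubgroup n k) : w * h = h * w := by
  refine Equiv.ext fun a => ?_
  simp only [Equiv.Perm.mul_apply]
  by_cases ha : (a : ℕ) < n - k
  · rw [hw a ha]
    have hha : ((h a : Fin n) : ℕ) < n - k := by
      by_contra hc
      push_neg at hc
      have h1 : h (h a) = h a := hh (h a) hc
      have h2 : h a = a := h.injective h1
      rw [h2] at hc
      omega
    exact hw _ hha
  · push_neg at ha
    rw [hh a ha]
    have hwa : n - k ≤ ((w a : Fin n) : ℕ) := by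
      by_contra hc
      push_neg at hc
      have h1 : w (w a) = w a := hw (w a) hc
      have h2 : w a = a := w.injective h1
      rw [h2] at hc
      omega
    rw [hh _ hwa]


/-- Let `k ≤ n`, let `w ∈ S_n` fix each of `1, …, n-k`, and let `R` be any complete
set of representatives of the left cosets of the standard copy `H` of `S_{n-k}`
(fixing `n-k+1, …, n`) in `S_n`.  Then in `ℂ[S_n]`,
`Σ_{g ∈ R} g w g⁻¹ = (z/(n-k)!) · Γ`, where `Γ` is the sum of all permutations
conjugate to `w` and `z` is the order of the centralizer of `w` in `S_n`. -/
theorem sum_conj_over_cosetReps (n k : ℕ) (hkn : k ≤ n) (w : Equiv.Perm (Fin n))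
    (hw : ∀ a : Fin n, (a : ℕ) < n - k → w a = a)
    (R : Finset (Equiv.Perm (Fin n)))
    (hR : ∀ σ : Equiv.Perm (Fin n), ∃! r, r ∈ R ∧ r⁻¹ * σ ∈ lastFixSubgroup n k) :
    ∑ g ∈ R, MonoidAlgebra.of ℂ (Equiv.Perm (Fin n)) (g * w * g⁻¹)
      = ((Nat.card (Subgroup.centralizer ({w} : Set (Equiv.Perm (Fin n)))) : ℂ)
            / ((n - k).factorial : ℂ)) •
          ∑ g ∈ Finset.univ.filter (fun g : Equiv.Perm (Fin n) => IsConj w g),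
            MonoidAlgebra.of ℂ (Equiv.Perm (Fin n)) g := by
  classical
  let G := Equiv.Perm (Fin n)
  let H := lastFixSubgroup n k
  set f : G → MonoidAlgebra ℂ G := fun g => MonoidAlgebra.of ℂ G (g * w * g⁻¹) with hf
  set z := Nat.card (Subgroup.centralizer ({w} : Set G)) with hz
  set m := (n - k).factorial with hm
  -- f is constant on left cosets of H
  have key : ∀ g h : G, h ∈ H → f (g * h) = f g := by
    intro g h hh
    have hcomm : w * h = h * w := lastFix_comm n k w hw hh
    have : g * h * w * (g * h)⁻¹ = g * w * g⁻¹ := by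
      rw [mul_inv_rev]
      have : h * w * h⁻¹ = w := by
        rw [← hcomm]; exact mul_inv_cancel_right w h
      calc g * h * w * (h⁻¹ * g⁻¹) = g * (h * w * h⁻¹) * g⁻¹ := by group
        _ = g * w * g⁻¹ := by rw [this]
    simp only [hf, this]
  -- representative map
  choose ρ hρmem hρuniq using hR
  have hρR : ∀ g, ρ g ∈ R := fun g => (hρmem g).1
  have hρH : ∀ g, (ρ g)⁻¹ * g ∈ H := fun g => (hρmem g).2
  have hρu : ∀ g r, r ∈ R → r⁻¹ * g ∈ H → ρ g = r := by
    intro g r hr hrg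
    exact (hρuniq g r ⟨hr, hrg⟩).symm
  -- sum over G fibered over R
  have eq1 : ∑ g : G, f g = m • ∑ r ∈ R, f r := by
    rw [← Finset.sum_fiberwise_of_maps_to (fun g _ => hρR g) f, Finset.smul_sum]
    refine Finset.sum_congr rfl fun r hr => ?_
    have hfr : ∀ g ∈ Finset.univ.filter (fun g => ρ g = r), f g = f r := by
      intro g hg
      simp only [Finset.mem_filter] at hg
      have : g = r * (r⁻¹ * g) := by group
      rw [this, key r (r⁻¹ * g) (hg.2 ▸ hρH g)]
    rw [Finset.sum_congr rfl hfr, Finset.sum_const]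
    congr 1
    -- card of fiber = m
    have hset : Finset.univ.filter (fun g => ρ g = r) =
        Finset.univ.filter (fun g => r⁻¹ * g ∈ H) := by
      ext g
      simp only [Finset.mem_filter, Finset.mem_univ, true_and]
      constructor
      · rintro rfl; exact hρH g
      · intro hg; exact hρu g r hr hg
    rw [hset]
    have : (Finset.univ.filter (fun g => r⁻¹ * g ∈ H)).card =
        (Finset.univ.filter (fun g : G => g ∈ H)).card := by
      apply Finset.card_bij (fun g _ => r⁻¹ * g)
      · intro g hg
        simp only [Finset.mem_filter, Finset.mem_univ, true_and] at hg ⊢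
        exact hg
      · intro g₁ h₁ g₂ h₂ hgg
        exact mul_left_cancel hgg
      · intro b hb
        simp only [Finset.mem_filter, Finset.mem_univ, true_and] at hb
        exact ⟨r * b, by simp only [Finset.mem_filter, Finset.mem_univ, true_and,
          inv_mul_cancel_left]; exact hb, by group⟩
    rw [this, ← Fintype.card_subtype, ← Nat.card_eq_fintype_card]
    exact (card_lastFixSubgroup n k)
  -- sum over G fibered over conjugacy class
  have eq2 : ∑ g : G, f g = z • ∑ x ∈ Finset.univ.filter (fun x : G => IsConj w x),
      MonoidAlgebra.of ℂ G x := by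
    have hmaps : ∀ g : G, g ∈ Finset.univ →
        g * w * g⁻¹ ∈ Finset.univ.filter (fun x : G => IsConj w x) := by
      intro g _
      simp only [Finset.mem_filter, Finset.mem_univ, true_and]
      exact isConj_iff.mpr ⟨g, rfl⟩
    rw [← Finset.sum_fiberwise_of_maps_to hmaps f, Finset.smul_sum]
    refine Finset.sum_congr rfl fun x hx => ?_
    simp only [Finset.mem_filter, Finset.mem_univ, true_and] at hx
    obtain ⟨g₀, hg₀⟩ := isConj_iff.mp hx
    have hfr : ∀ g ∈ Finset.univ.filter (fun g : G => g * w * g⁻¹ = x),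
        f g = MonoidAlgebra.of ℂ G x := by
      intro g hg
      simp only [Finset.mem_filter, Finset.mem_univ, true_and] at hg
      simp only [hf, hg]
    rw [Finset.sum_congr rfl hfr, Finset.sum_const]
    congr 1
    have : (Finset.univ.filter (fun g : G => g * w * g⁻¹ = x)).card =
        (Finset.univ.filter (fun g : G =>
          g ∈ Subgroup.centralizer ({w} : Set G))).card := by
      apply Finset.card_bij (fun g _ => g₀⁻¹ * g)
      · intro g hg
        simp only [Finset.mem_filter, Finset.mem_univ, true_and] at hg ⊢
        rw [Subgroup.mem_centralizer_singleton_iff]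
        have : g * w * g⁻¹ = g₀ * w * g₀⁻¹ := by rw [hg, hg₀]
        have h2 : g₀⁻¹ * (g * w * g⁻¹) * g₀ = w := by
          rw [this]; group
        calc g₀⁻¹ * g * w = g₀⁻¹ * (g * w * g⁻¹) * g₀ * (g₀⁻¹ * g) := by group
          _ = w * (g₀⁻¹ * g) := by rw [h2]
      · intro g₁ h₁ g₂ h₂ hgg
        exact mul_left_cancel hgg
      · intro b hb
        simp only [Finset.mem_filter, Finset.mem_univ, true_and,
          Subgroup.mem_centralizer_singleton_iff] at hb
        refine ⟨g₀ * b, ?_, by group⟩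
        simp only [Finset.mem_filter, Finset.mem_univ, true_and]
        rw [mul_inv_rev]
        calc g₀ * b * w * (b⁻¹ * g₀⁻¹) = g₀ * (b * w * b⁻¹) * g₀⁻¹ := by group
          _ = g₀ * w * g₀⁻¹ := by rw [show b * w * b⁻¹ = w by rw [hb]; group]
          _ = x := hg₀
    rw [this, ← Fintype.card_subtype, ← Nat.card_eq_fintype_card]
  -- combine
  have hmain : (m : ℂ) • (∑ g ∈ R, f g) = (z : ℂ) •
      ∑ x ∈ Finset.univ.filter (fun x : G => IsConj w x), MonoidAlgebra.of ℂ G x := by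
    rw [Nat.cast_smul_eq_nsmul, Nat.cast_smul_eq_nsmul, ← eq1, ← eq2]
  have hm0 : (m : ℂ) ≠ 0 := Nat.cast_ne_zero.mpr (Nat.factorial_ne_zero _)
  calc ∑ g ∈ R, f g = (m : ℂ)⁻¹ • ((m : ℂ) • ∑ g ∈ R, f g) := by
        rw [smul_smul, inv_mul_cancel₀ hm0, one_smul]
    _ = ((z : ℂ) / (m : ℂ)) • ∑ x ∈ Finset.univ.filter (fun x : G => IsConj w x),
        MonoidAlgebra.of ℂ G x := by
        rw [hmain, smul_smul, div_eq_inv_mul]
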